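/- Let h : ℝ² → ℝ be a bounded C² function, let ε₀ > 0, and let g ∈ L²(ℝ²) with g(x) ≥ 0 for almost every x. If Δh(x) + ε₀ g(x) ≤ 0 for almost every x ∈ ℝ², then g = 0 almost everywhere (and h is constant). -/

import Mathlib

open MeasureTheory Filter Topology Real

noncomputable section

/-- The plane `ℝ²`. -/
abbrev E2 : Type := EuclideanSpace ℝ (Fin 2)
/-- The target space `ℝ³`. -/
abbrev E3 : Type := EuclideanSpace ℝ (Fin 3)

/-- Partial derivative `∂ᵢ f` of a scalar function on `ℝ²`. -/
def pd (i : Fin 2) (f : E2 → ℝ) (x : E2) : ℝ := fderiv ℝ f x (EuclideanSpace.single i 1)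

/-- Laplacian of a scalar function on `ℝ²`. -/
def lap (f : E2 → ℝ) (x : E2) : ℝ := ∑ i : Fin 2, pd i (pd i f) x

/-- `|∇d|² = Σ_{i,j} (∂_i d_j)²` for a map `d : ℝ² → ℝ³`. -/
def gradSq (d : E2 → E3) (x : E2) : ℝ :=
  ∑ i : Fin 2, ∑ j : Fin 3, (pd i (fun y => d y j) x) ^ 2

/-- The north pole `e₃ = (0,0,1) ∈ 𝕊²`. -/
def e3 : E3 := EuclideanSpace.single 2 1

def eV (i : Fin 2) : E2 := EuclideanSpace.single i 1
def prj (i : Fin 2) : E2 →L[ℝ] ℝ := EuclideanSpace.proj i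

lemma pd_def (i : Fin 2) (f : E2 → ℝ) (x : E2) : pd i f x = fderiv ℝ f x (eV i) := rfl

lemma pd_eq (i : Fin 2) {f : E2 → ℝ} {L : E2 →L[ℝ] ℝ} {x : E2} (hf : HasFDerivAt f L x) :
    pd i f x = L (eV i) := by rw [pd_def, hf.fderiv]

lemma prj_eV (i j : Fin 2) : prj j (eV i) = if i = j then 1 else 0 := by
  show EuclideanSpace.single i 1 j = _
  rw [EuclideanSpace.single_apply]
  by_cases h : i = j <;> simp [h, eq_comm]

lemma hasFDerivAt_coord (i : Fin 2) (x : E2) : HasFDerivAt (fun z : E2 => z i) (prj i) x :=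
  (EuclideanSpace.proj (𝕜 := ℝ) i).hasFDerivAt

-- squared distance to p, coordinates
def n2 (p : E2) (z : E2) : ℝ := (z 0 - p 0)^2 + (z 1 - p 1)^2
def Dn2 (p : E2) (x : E2) : E2 →L[ℝ] ℝ := (2*(x 0 - p 0)) • prj 0 + (2*(x 1 - p 1)) • prj 1
def qf (z : E2) : ℝ := (z 0)^2 + (z 1)^2
def Dqf (x : E2) : E2 →L[ℝ] ℝ := (2*(x 0)) • prj 0 + (2*(x 1)) • prj 1

lemma sq_hasFDerivAt (i : Fin 2) (c : ℝ) (x : E2) :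
    HasFDerivAt (fun z : E2 => (z i - c)^2) ((2*(x i - c)) • prj i) x := by
  have h1 : HasFDerivAt (fun z : E2 => z i - c) (prj i) x := (hasFDerivAt_coord i x).sub_const c
  have := h1.mul h1
  rw [show (fun z : E2 => (z i - c)^2) = (fun z => z i - c) * (fun z => z i - c) by
    funext z; simp [sq], two_mul, add_smul]
  exact this

lemma hasFDerivAt_n2 (p x : E2) : HasFDerivAt (n2 p) (Dn2 p x) x :=
  (sq_hasFDerivAt 0 (p 0) x).add (sq_hasFDerivAt 1 (p 1) x)

lemma hasFDerivAt_qf (x : E2) : HasFDerivAt qf (Dqf x) x := by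
  have := (sq_hasFDerivAt 0 0 x).add (sq_hasFDerivAt 1 0 x)
  rw [show qf = ((fun z : E2 => (z 0 - 0) ^ 2) + fun z => (z 1 - 0) ^ 2) by funext z; simp [qf],
    show Dqf x = (2 * (x 0 - 0)) • prj 0 + (2 * (x 1 - 0)) • prj 1 by simp [Dqf]]
  exact this

lemma Dn2_apply (p x : E2) (i : Fin 2) : Dn2 p x (eV i) = 2*(x i - p i) := by
  fin_cases i <;> simp [Dn2, prj_eV]

lemma Dqf_apply (x : E2) (i : Fin 2) : Dqf x (eV i) = 2*(x i) := by
  fin_cases i <;> simp [Dqf, prj_eV]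

section Wfun
variable (h : E2 → ℝ) (p : E2) (β η : ℝ)

def Wf (z : E2) : ℝ := -h z - β * Real.log (n2 p z) + η * qf z
def LW (x : E2) : E2 →L[ℝ] ℝ :=
  (-(fderiv ℝ h x) - (β * (n2 p x)⁻¹) • Dn2 p x) + η • Dqf x

lemma hasFDerivAt_W (hdiff : Differentiable ℝ h) (x : E2) (hx : n2 p x ≠ 0) :
    HasFDerivAt (Wf h p β η) (LW h p β η x) x := by
  have h1 : HasFDerivAt (fun z => -h z) (-(fderiv ℝ h x)) x := (hdiff x).hasFDerivAt.neg
  have h2 : HasFDerivAt (fun z => β * Real.log (n2 p z)) ((β * (n2 p x)⁻¹) • Dn2 p x) x := by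
    have := ((hasFDerivAt_n2 p x).log hx).const_mul β
    rwa [smul_smul] at this
  have h3 : HasFDerivAt (fun z => η * qf z) (η • Dqf x) x := (hasFDerivAt_qf x).const_mul η
  exact (h1.sub h2).add h3

def GW (i : Fin 2) (z : E2) : ℝ :=
  -(pd i h z) - β * ((n2 p z)⁻¹ * (2*(z i - p i))) + η * (2 * z i)

lemma LW_apply (i : Fin 2) (z : E2) : LW h p β η z (eV i) = GW h p β η i z := by
  simp only [LW, GW, ContinuousLinearMap.add_apply, ContinuousLinearMap.sub_apply,
    ContinuousLinearMap.neg_apply, ContinuousLinearMap.coe_smul', Pi.smul_apply,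
    Dn2_apply, Dqf_apply, smul_eq_mul]
  rw [← pd_def]
  ring

def L2 (i : Fin 2) (x : E2) : E2 →L[ℝ] ℝ :=
  (-(fderiv ℝ (pd i h) x) -
    β • ((n2 p x)⁻¹ • ((2:ℝ) • prj i) + (2*(x i - p i)) • ((-(((n2 p x))^2)⁻¹) • Dn2 p x))) +
    η • ((2:ℝ) • prj i)

lemma hasFDerivAt_GW (i : Fin 2) (x : E2) (hpd : DifferentiableAt ℝ (pd i h) x)
    (hx : n2 p x ≠ 0) : HasFDerivAt (GW h p β η i) (L2 h p β η i x) x := by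
  have hA : HasFDerivAt (fun z => -(pd i h z)) (-(fderiv ℝ (pd i h) x)) x := hpd.hasFDerivAt.neg
  have hinv : HasFDerivAt (fun z => (n2 p z)⁻¹) ((-(((n2 p x))^2)⁻¹) • Dn2 p x) x :=
    (hasDerivAt_inv hx).comp_hasFDerivAt x (hasFDerivAt_n2 p x)
  have hlin : HasFDerivAt (fun z : E2 => 2*(z i - p i)) ((2:ℝ) • prj i) x := by
    have := ((hasFDerivAt_coord i x).sub_const (p i)).const_mul (2:ℝ)
    exact this
  have hmul := hinv.mul hlin
  have hB := hmul.const_mul β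
  have hC : HasFDerivAt (fun z : E2 => η * (2 * z i)) (η • ((2:ℝ) • prj i)) x :=
    ((hasFDerivAt_coord i x).const_mul (2:ℝ)).const_mul η
  exact (hA.sub hB).add hC

lemma L2_apply (i : Fin 2) (x : E2) :
    L2 h p β η i x (eV i) =
      -(pd i (pd i h) x)
        - β * ((n2 p x)⁻¹ * 2 + (2*(x i - p i)) * ((-(((n2 p x))^2)⁻¹) * (2*(x i - p i))))
        + η * 2 := by
  simp only [L2, ContinuousLinearMap.add_apply, ContinuousLinearMap.sub_apply,
    ContinuousLinearMap.neg_apply, ContinuousLinearMap.coe_smul', Pi.smul_apply,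
    Dn2_apply, prj_eV, smul_eq_mul, if_pos rfl, if_true]
  rw [← pd_def]
  ring

lemma sum_L2 (x : E2) (hx : n2 p x ≠ 0) :
    ∑ i : Fin 2, L2 h p β η i x (eV i) = -(lap h x) + 4*η := by
  rw [Fin.sum_univ_two, L2_apply, L2_apply]
  rw [lap, Fin.sum_univ_two]
  have hn2 : n2 p x = (x 0 - p 0)^2 + (x 1 - p 1)^2 := rfl
  rw [hn2] at hx ⊢
  field_simp
  ring
end Wfun

section Reg
variable {h : E2 → ℝ}

lemma pd_contDiff (hreg : ContDiff ℝ 2 h) (i : Fin 2) : ContDiff ℝ 1 (pd i h) := by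
  have := (hreg.fderiv_right (m := 1) (by norm_num)).clm_apply (contDiff_const (c := eV i))
  exact this

lemma lap_continuous (hreg : ContDiff ℝ 2 h) : Continuous (lap h) := by
  have : ∀ i : Fin 2, Continuous (pd i (pd i h)) := by
    intro i
    have h1 : Continuous (fderiv ℝ (pd i h)) := (pd_contDiff hreg i).continuous_fderiv one_ne_zero
    exact h1.clm_apply continuous_const
  exact continuous_finset_sum _ fun i _ => this i
end Reg


lemma deriv2_nonpos {γ g1 : ℝ → ℝ} {c : ℝ}
    (hγ : ∀ᶠ t in 𝓝 (0:ℝ), HasDerivAt γ (g1 t) t)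
    (hg1 : HasDerivAt g1 c 0) (hmax : IsLocalMax γ 0) : c ≤ 0 := by
  by_contra hc
  push_neg at hc
  have h00 : g1 0 = 0 := by
    have h1 : deriv γ 0 = g1 0 := hγ.self_of_nhds.deriv
    have h2 : deriv γ 0 = 0 := hmax.deriv_eq_zero
    rw [h1] at h2; exact h2
  have hslope : Tendsto (slope g1 0) (𝓝[≠] 0) (𝓝 c) := hasDerivAt_iff_tendsto_slope.mp hg1
  have hev : ∀ᶠ t in 𝓝[≠] (0:ℝ), 0 < slope g1 0 t := hslope.eventually (eventually_gt_nhds hc)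
  have hev' : ∀ᶠ t in 𝓝 (0:ℝ), t ≠ 0 → 0 < slope g1 0 t := by
    simpa [eventually_nhdsWithin_iff] using hev
  have hbig := (hγ.and hev').and hmax
  rw [Metric.eventually_nhds_iff] at hbig
  obtain ⟨δ, hδ, hall⟩ := hbig
  set b := δ/2 with hb
  have hb0 : 0 < b := by positivity
  have hmem : ∀ t ∈ Set.Icc (0:ℝ) b, dist t (0:ℝ) < δ := by
    intro t ht
    rw [Real.dist_eq, sub_zero, abs_of_nonneg ht.1]
    linarith [ht.2]
  have hderivs : ∀ t ∈ Set.Ioo (0:ℝ) b, HasDerivAt γ (g1 t) t := fun t ht =>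
    (hall (hmem t ⟨le_of_lt ht.1, le_of_lt ht.2⟩)).1.1
  have hcont : ContinuousOn γ (Set.Icc 0 b) := fun t ht =>
    ((hall (hmem t ht)).1.1.continuousAt).continuousWithinAt
  obtain ⟨t, ht, hslope_eq⟩ := exists_hasDerivAt_eq_slope γ g1 hb0 hcont hderivs
  have hg1t : 0 < g1 t := by
    have := (hall (hmem t ⟨le_of_lt ht.1, le_of_lt ht.2⟩)).1.2 (ne_of_gt ht.1)
    rw [slope_def_field] at this
    have : 0 < (g1 t - g1 0) / (t - 0) := this
    rw [h00, sub_zero, sub_zero] at this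
    exact (div_pos_iff.mp this).resolve_right (fun ⟨_, h⟩ => absurd ht.1 (not_lt.mpr h.le)) |>.1
  have hγb : γ b ≤ γ 0 := (hall (hmem b ⟨le_of_lt hb0, le_refl b⟩)).2
  rw [hslope_eq] at hg1t
  rw [sub_zero] at hg1t
  have : 0 < γ b - γ 0 := by
    have h := mul_pos hg1t hb0
    rwa [div_mul_cancel₀ _ (ne_of_gt hb0)] at h
  linarith



lemma line_hasDerivAt (x v : E2) (t : ℝ) : HasDerivAt (fun t : ℝ => x + t • v) v t := by
  simpa using ((hasDerivAt_id t).smul_const v).const_add x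


lemma secondDeriv_nonpos (W : E2 → ℝ) (LW : E2 → E2 →L[ℝ] ℝ) (s : Set E2) (hs : IsOpen s)
    (hW : ∀ y ∈ s, HasFDerivAt W (LW y) y) (i : Fin 2) (L2 : E2 →L[ℝ] ℝ) (x : E2)
    (hW2 : HasFDerivAt (fun z => LW z (eV i)) L2 x) (hx : x ∈ s) (hmax : IsLocalMax W x) :
    L2 (eV i) ≤ 0 := by
  set φ : ℝ → E2 := fun t => x + t • eV i with hφdef
  have hφcont : Continuous φ := by continuity
  have hφ0 : φ 0 = x := by simp [hφdef]
  have hsopen : IsOpen {t : ℝ | φ t ∈ s} := hs.preimage hφcont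
  have h0mem : (0:ℝ) ∈ {t : ℝ | φ t ∈ s} := by simp [hφ0, hx]
  have hγ : ∀ᶠ t in 𝓝 (0:ℝ), HasDerivAt (fun t => W (φ t)) ((fun t => LW (φ t) (eV i)) t) t := by
    filter_upwards [hsopen.mem_nhds h0mem] with t ht
    exact (hW _ ht).comp_hasDerivAt t (line_hasDerivAt x (eV i) t)
  have hg1 : HasDerivAt (fun t => LW (φ t) (eV i)) (L2 (eV i)) 0 := by
    have hW2' : HasFDerivAt (fun z => LW z (eV i)) L2 (φ 0) := by rwa [hφ0]
    exact hW2'.comp_hasDerivAt 0 (line_hasDerivAt x (eV i) 0)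
  have hmaxγ : IsLocalMax (fun t => W (φ t)) 0 := by
    have h1 : Tendsto φ (𝓝 0) (𝓝 x) := hφ0 ▸ hφcont.continuousAt
    have := h1.eventually hmax
    simpa [IsLocalMax, IsMaxFilter, hφ0] using this
  exact deriv2_nonpos hγ hg1 hmaxγ


lemma max_principle (p : E2) (r R : ℝ) (hr : 0 < r) (hrR : r < R)
    (W : E2 → ℝ) (LW : E2 → E2 →L[ℝ] ℝ) (L2 : Fin 2 → E2 → E2 →L[ℝ] ℝ)
    (hWc : ContinuousOn W (Metric.closedBall p R \ Metric.ball p r))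
    (hW : ∀ y ∈ Metric.ball p R \ Metric.closedBall p r, HasFDerivAt W (LW y) y)
    (hW2 : ∀ i : Fin 2, ∀ y ∈ Metric.ball p R \ Metric.closedBall p r,
      HasFDerivAt (fun z => LW z (eV i)) (L2 i y) y)
    (hpos : ∀ y ∈ Metric.ball p R \ Metric.closedBall p r, 0 < ∑ i : Fin 2, L2 i y (eV i))
    (B : ℝ) (hB : ∀ z : E2, dist z p = r ∨ dist z p = R → W z ≤ B) :
    ∀ y ∈ Metric.closedBall p R \ Metric.ball p r, W y ≤ B := by
  set K := Metric.closedBall p R \ Metric.ball p r with hK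
  set U := Metric.ball p R \ Metric.closedBall p r with hU
  intro y hy
  have hKc : IsCompact K := (isCompact_closedBall p R).diff Metric.isOpen_ball
  obtain ⟨z, hzK, hzmax⟩ := hKc.exists_isMaxOn ⟨y, hy⟩ hWc
  have hUK : U ⊆ K := fun w hw =>
    ⟨Metric.ball_subset_closedBall hw.1, fun hc => hw.2 (Metric.ball_subset_closedBall hc)⟩
  by_cases hzU : z ∈ U
  · exfalso
    have hUopen : IsOpen U := Metric.isOpen_ball.sdiff Metric.isClosed_closedBall
    have hloc : IsLocalMax W z := hzmax.isLocalMax (Filter.mem_of_superset (hUopen.mem_nhds hzU) hUK)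
    have hle : ∀ i : Fin 2, L2 i z (eV i) ≤ 0 := fun i =>
      secondDeriv_nonpos W LW U hUopen hW i (L2 i z) z (hW2 i z hzU) hzU hloc
    have : (0:ℝ) < ∑ i : Fin 2, L2 i z (eV i) := hpos z hzU
    have h2 : ∑ i : Fin 2, L2 i z (eV i) ≤ 0 := Finset.sum_nonpos fun i _ => hle i
    linarith
  · have hbd : dist z p = r ∨ dist z p = R := by
      have h1 : dist z p ≤ R := Metric.mem_closedBall.mp hzK.1
      have h2 : ¬ dist z p < r := fun hc => hzK.2 (Metric.mem_ball.mpr hc)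
      rcases lt_or_eq_of_le h1 with h3 | h3
      · left
        by_contra hne
        exact hzU ⟨Metric.mem_ball.mpr h3, fun hc =>
          hne (le_antisymm (Metric.mem_closedBall.mp hc) (not_lt.mp h2))⟩
      · right; exact h3
    exact le_trans (hzmax hy) (hB z hbd)

lemma n2_eq (p z : E2) : n2 p z = dist z p ^ 2 := by
  have h1 : dist z p ^ 2 = ∑ i, dist (z i) (p i) ^ 2 := by
    rw [EuclideanSpace.dist_eq, Real.sq_sqrt]
    positivity
  rw [h1, Fin.sum_univ_two]
  simp [n2, Real.dist_eq, sq_abs]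

lemma qf_eq (z : E2) : qf z = ‖z‖ ^ 2 := by
  have h1 : ‖z‖ ^ 2 = ∑ i, ‖z i‖ ^ 2 := by
    rw [EuclideanSpace.norm_eq, Real.sq_sqrt]
    positivity
  rw [h1, Fin.sum_univ_two]
  simp [qf, sq_abs]

lemma h_le (h : E2 → ℝ) (hreg : ContDiff ℝ 2 h) (M : ℝ) (hM : ∀ y, |h y| ≤ M)
    (hlap : ∀ y, lap h y ≤ 0) (p x : E2) : h p ≤ h x := by
  rcases eq_or_ne x p with rfl | hxp
  · exact le_refl _
  have hdiff : Differentiable ℝ h := hreg.differentiable (by norm_num)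
  set ρ := dist x p with hρdef
  have hρ0 : 0 < ρ := dist_pos.mpr hxp
  set M' : ℝ := M + 1 with hM'def
  have hM'pos : 0 < M' := by have := (abs_nonneg (h p)).trans (hM p); linarith
  apply le_of_forall_pos_le_add
  intro ε hε
  obtain ⟨δ, hδ0, hδ⟩ := Metric.continuousAt_iff.mp (hreg.continuous.continuousAt (x := p))
    (ε/2) (by linarith)
  set r := min (δ/2) (ρ/2) with hrdef
  have hr0 : 0 < r := lt_min (by linarith) (by linarith)
  have hrρ : r < ρ := lt_of_le_of_lt (min_le_right _ _) (by linarith)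
  have hrδ : r < δ := lt_of_le_of_lt (min_le_left _ _) (by linarith)
  have hlogρr : 0 < Real.log (ρ/r) := Real.log_pos (by rw [lt_div_iff₀ hr0]; linarith)
  set L := max (Real.log (ρ/r) + 1) (4*M'*Real.log (ρ/r)/ε) with hLdef
  have hLlog : Real.log (ρ/r) < L := lt_of_lt_of_le (by linarith) (le_max_left _ _)
  have hL0 : 0 < L := lt_trans hlogρr hLlog
  set R := r * Real.exp L with hRdef
  have hRρ : ρ < R := by
    have h1 : ρ = r * Real.exp (Real.log (ρ/r)) := by
      rw [Real.exp_log (by positivity)]; field_simp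
    rw [h1, hRdef]
    exact mul_lt_mul_of_pos_left (Real.exp_lt_exp.mpr hLlog) hr0
  have hrR : r < R := lt_trans hrρ hRρ
  have hR0 : 0 < R := lt_trans hr0 hrR
  have hlogRr : Real.log (R/r) = L := by
    rw [hRdef, mul_comm, mul_div_assoc, div_self (ne_of_gt hr0), mul_one, Real.log_exp]
  set β := M' / L with hβdef
  have hβ0 : 0 < β := div_pos hM'pos hL0
  set C := (R + ‖p‖)^2 with hCdef
  have hC0 : 0 ≤ C := sq_nonneg _
  set B := -h p + ε/2 - β * Real.log (r^2) with hBdef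
  have hn2cont : Continuous (n2 p) := by
    have : Differentiable ℝ (n2 p) := fun y => (hasFDerivAt_n2 p y).differentiableAt
    exact this.continuous
  have hqfcont : Continuous qf := by
    have : Differentiable ℝ qf := fun y => (hasFDerivAt_qf y).differentiableAt
    exact this.continuous
  have hn2r : ∀ z : E2, r ≤ dist z p → n2 p z ≠ 0 := by
    intro z hz
    rw [n2_eq]
    have : 0 < dist z p := lt_of_lt_of_le hr0 hz
    positivity
  have hqfnn : ∀ z : E2, 0 ≤ qf z := by intro z; rw [qf_eq]; positivity
  have main : ∀ η : ℝ, 0 < η → Wf h p β η x ≤ B + η * C := by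
    intro η hη
    have hWc : ContinuousOn (Wf h p β η) (Metric.closedBall p R \ Metric.ball p r) := by
      intro z hz
      have hzr : r ≤ dist z p := not_lt.mp (fun hc => hz.2 (Metric.mem_ball.mpr hc))
      have : ContinuousAt (Wf h p β η) z := by
        have h1 : ContinuousAt (fun w => Real.log (n2 p w)) z :=
          (Real.continuousAt_log (hn2r z hzr)).comp hn2cont.continuousAt
        exact ((hreg.continuous.continuousAt.neg).sub (h1.const_mul β)).add
          (hqfcont.continuousAt.const_mul η)
      exact this.continuousWithinAt
    have hU : ∀ y : E2, y ∈ Metric.ball p R \ Metric.closedBall p r → n2 p y ≠ 0 := by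
      intro y hy
      exact hn2r y (le_of_lt (not_le.mp (fun hc => hy.2 (Metric.mem_closedBall.mpr hc))))
    have hW : ∀ y ∈ Metric.ball p R \ Metric.closedBall p r,
        HasFDerivAt (Wf h p β η) (LW h p β η y) y := fun y hy =>
      hasFDerivAt_W h p β η hdiff y (hU y hy)
    have hW2 : ∀ i : Fin 2, ∀ y ∈ Metric.ball p R \ Metric.closedBall p r,
        HasFDerivAt (fun z => LW h p β η z (eV i)) (L2 h p β η i y) y := by
      intro i y hy
      have heq : (fun z => LW h p β η z (eV i)) = GW h p β η i := funext (LW_apply h p β η i)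
      rw [heq]
      exact hasFDerivAt_GW h p β η i y ((pd_contDiff hreg i).differentiable one_ne_zero y) (hU y hy)
    have hpos : ∀ y ∈ Metric.ball p R \ Metric.closedBall p r,
        0 < ∑ i : Fin 2, L2 h p β η i y (eV i) := by
      intro y hy
      rw [sum_L2 h p β η y (hU y hy)]
      have := hlap y
      linarith
    have hB : ∀ z : E2, dist z p = r ∨ dist z p = R → Wf h p β η z ≤ B + η * C := by
      intro z hz
      have hzR : dist z p ≤ R := by rcases hz with h1 | h1 <;> rw [h1]; exact le_of_lt hrR
      have hqfz : qf z ≤ C := by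
        rw [qf_eq, hCdef]
        have h2 : ‖z‖ ≤ R + ‖p‖ := by
          have h3 : ‖z - p‖ ≤ R := by rwa [← dist_eq_norm]
          calc ‖z‖ = ‖z - p + p‖ := by rw [sub_add_cancel]
          _ ≤ ‖z - p‖ + ‖p‖ := norm_add_le _ _
          _ ≤ R + ‖p‖ := by linarith
        exact pow_le_pow_left₀ (norm_nonneg z) h2 2
      rcases hz with h1 | h1
      · have hn2z : n2 p z = r^2 := by rw [n2_eq, h1]
        have hhz : -h z ≤ -h p + ε/2 := by
          have h2 : dist (h z) (h p) < ε/2 := hδ (by rw [h1]; exact hrδ)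
          rw [Real.dist_eq] at h2
          have := abs_lt.mp h2
          linarith [this.1]
        rw [Wf, hn2z, hBdef]
        have := mul_le_mul_of_nonneg_left hqfz (le_of_lt hη)
        linarith
      · have hn2z : n2 p z = R^2 := by rw [n2_eq, h1]
        have hhz : -h z ≤ M' := by
          have := abs_le.mp (hM z)
          rw [hM'def]; linarith [this.1]
        have hlogdiff : Real.log (R^2) - Real.log (r^2) = 2 * L := by
          rw [Real.log_pow, Real.log_pow, ← hlogRr,
            Real.log_div (ne_of_gt hR0) (ne_of_gt hr0)]
          push_cast; ring
        have hβL : β * L = M' := by rw [hβdef]; field_simp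
        have hhp : h p ≤ M' := by have := abs_le.mp (hM p); rw [hM'def]; linarith [this.2]
        rw [Wf, hn2z, hBdef]
        have h4 := mul_le_mul_of_nonneg_left hqfz (le_of_lt hη)
        have h5 : β * Real.log (R^2) = β * Real.log (r^2) + 2 * M' := by
          have : β * (Real.log (R^2) - Real.log (r^2)) = 2 * M' := by
            rw [hlogdiff]; rw [show β * (2*L) = 2*(β*L) by ring, hβL]
          linarith [this]
        linarith
    have hxK : x ∈ Metric.closedBall p R \ Metric.ball p r :=
      ⟨Metric.mem_closedBall.mpr (le_of_lt hRρ), fun hc =>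
        absurd (Metric.mem_ball.mp hc) (not_lt.mpr (le_of_lt hrρ))⟩
    exact max_principle p r R hr0 hrR (Wf h p β η) (LW h p β η) (L2 h p β η)
      hWc hW hW2 hpos (B + η * C) hB x hxK
  -- let η → 0
  have hA : -h x - β * Real.log (n2 p x) ≤ B := by
    apply le_of_forall_pos_le_add
    intro ε' hε'
    have hη : 0 < ε' / (C + 1) := by positivity
    have h1 := main (ε' / (C + 1)) hη
    rw [Wf] at h1
    have h2' : 0 ≤ ε' / (C + 1) * qf x := mul_nonneg (le_of_lt hη) (hqfnn x)
    have h3 : ε' / (C + 1) * C ≤ ε' := by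
      rw [div_mul_eq_mul_div, div_le_iff₀ (by linarith)]
      nlinarith
    have h4 : -h x - β * Real.log (n2 p x) ≤ B + ε' / (C + 1) * C := by
      refine le_trans ?_ h1
      linarith
    clear_value B C
    linarith
  have hn2x : n2 p x = ρ^2 := by rw [n2_eq]
  have hfinal : β * (Real.log (ρ^2) - Real.log (r^2)) ≤ ε/2 := by
    have h1 : Real.log (ρ^2) - Real.log (r^2) = 2 * Real.log (ρ/r) := by
      rw [Real.log_pow, Real.log_pow, Real.log_div (ne_of_gt hρ0) (ne_of_gt hr0)]
      push_cast; ring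
    rw [h1, hβdef]
    have hLge : 4*M'*Real.log (ρ/r)/ε ≤ L := le_max_right _ _
    have h2 : 4*M'*Real.log (ρ/r) ≤ ε * L := by
      rw [div_le_iff₀ hε] at hLge; linarith
    rw [div_mul_eq_mul_div, div_le_iff₀ hL0]
    linarith
  rw [hn2x] at hA
  rw [hBdef] at hA
  linarith

lemma pd_const (c : ℝ) (i : Fin 2) : pd i (fun _ : E2 => c) = fun _ : E2 => (0:ℝ) := by
  funext y
  rw [pd_def, fderiv_const_apply]
  rfl

lemma lap_const (c : ℝ) (x : E2) : lap (fun _ : E2 => c) x = 0 := by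
  simp [lap, pd_const]

/-- If `h : ℝ² → ℝ` is a bounded `C²` function, `ε₀ > 0`,
`g ∈ L²(ℝ²)` is a.e. nonnegative, and `Δh + ε₀ g ≤ 0` a.e., then `g = 0` a.e.
and `h` is constant. -/
theorem superharmonic_rigidity (h : E2 → ℝ) (hreg : ContDiff ℝ 2 h)
    (hbd : ∃ M : ℝ, ∀ x, |h x| ≤ M)
    (ε₀ : ℝ) (hε₀ : 0 < ε₀)
    (g : E2 → ℝ) (hg : MemLp g 2 volume) (hgpos : ∀ᵐ x : E2 ∂volume, 0 ≤ g x)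
    (hsuper : ∀ᵐ x : E2 ∂volume, lap h x + ε₀ * g x ≤ 0) :
    (∀ᵐ x : E2 ∂volume, g x = 0) ∧ ∃ c : ℝ, ∀ x, h x = c := by
  obtain ⟨M, hM⟩ := hbd
  have hlap : ∀ x : E2, lap h x ≤ 0 := by
    have hae : ∀ᵐ x : E2 ∂volume, lap h x ≤ 0 := by
      filter_upwards [hsuper, hgpos] with x h1 h2
      nlinarith [mul_nonneg (le_of_lt hε₀) h2]
    by_contra hc
    push_neg at hc
    obtain ⟨x₀, hx₀⟩ := hc
    have hopen : IsOpen ((lap h) ⁻¹' (Set.Ioi 0)) := isOpen_Ioi.preimage (lap_continuous hreg)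
    have hpos := hopen.measure_pos (volume : Measure E2) ⟨x₀, hx₀⟩
    have hnull : volume ((lap h) ⁻¹' (Set.Ioi 0)) = 0 := by
      apply measure_mono_null _ (ae_iff.mp hae)
      intro y hy
      simp only [Set.mem_preimage, Set.mem_Ioi] at hy
      simp only [Set.mem_setOf_eq, not_le]
      exact hy
    rw [hnull] at hpos
    exact lt_irrefl 0 hpos
  have hconst : ∀ y : E2, h y = h 0 := fun y =>
    le_antisymm (h_le h hreg M hM hlap y 0) (h_le h hreg M hM hlap 0 y)
  have hlap0 : ∀ x : E2, lap h x = 0 := by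
    intro x
    have hh : h = fun _ : E2 => h 0 := funext hconst
    conv_lhs => rw [hh]
    exact lap_const (h 0) x
  refine ⟨?_, ⟨h 0, hconst⟩⟩
  filter_upwards [hsuper, hgpos] with x h1 h2
  rw [hlap0 x, zero_add] at h1
  by_contra hne
  have hgx : 0 < g x := lt_of_le_of_ne h2 (Ne.symm hne)
  nlinarith [mul_pos hε₀ hgx]
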